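/- arXiv:2206.00594 — 2 statements merged into one kernel-verified Lean document; each statement's English description precedes it below -/
import Mathlib

section
/- There is a constant c > 0 such that for every integer k ≥ 2 the following holds: if G is a graph with at least one vertex and average degree at least c · k · log k, then every strict subdivision of G contains k pairwise independent cycles (equivalently, contains the disjoint union of k cycles as an induced subgraph). -/
open SimpleGraph

noncomputable def degN {V : Type} (G : SimpleGraph V) (v : V) : ℕ :=
  Nat.card (G.neighborSet v)

def HasIndepCycles {V : Type} (G : SimpleGraph V) (k : ℕ) : Prop :=
  ∃ (b : Fin k → V) (w : ∀ i, G.Walk (b i) (b i)),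
    (∀ i, (w i).IsCycle) ∧
    ∀ i j, i ≠ j →
      ∀ x ∈ (w i).support, ∀ y ∈ (w j).support, x ≠ y ∧ ¬ G.Adj x y

def OkFree {V : Type} (G : SimpleGraph V) (k : ℕ) : Prop :=
  ¬ HasIndepCycles G k

def ContainsKst {V : Type} (G : SimpleGraph V) (s t : ℕ) : Prop :=
  ∃ A B : Finset V, Disjoint A B ∧ A.card = s ∧ B.card = t ∧
    ∀ a ∈ A, ∀ b ∈ B, G.Adj a b

def IsFVS {V : Type} (G : SimpleGraph V) (X : Set V) : Prop :=
  (G.induce {v | v ∉ X}).IsAcyclic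

def GirthAtLeast {V : Type} (G : SimpleGraph V) (ℓ : ℕ) : Prop :=
  ∀ (v : V) (w : G.Walk v v), w.IsCycle → ℓ ≤ w.length

noncomputable def cycleRank {V : Type} (G : SimpleGraph V) : ℤ :=
  (Nat.card G.edgeSet : ℤ) - (Nat.card V : ℤ) + (Nat.card G.ConnectedComponent : ℤ)

/-- `H` is a strict subdivision of `G`, witnessed by the vertex embedding `f` and, for
each edge of `G`, a path `p u v h` of `H` of length at least 2 joining the images of
its endpoints: the paths are internally disjoint from the branch vertices and from
each other, and `H` has exactly the vertices and edges of these paths. -/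
def IsStrictSubdivision {V W : Type} (G : SimpleGraph V) (H : SimpleGraph W)
    (f : V → W) (p : ∀ u v, G.Adj u v → H.Walk (f u) (f v)) : Prop :=
  Function.Injective f ∧
  (∀ u v (h : G.Adj u v), (p u v h).IsPath ∧ 2 ≤ (p u v h).length) ∧
  (∀ u v (h : G.Adj u v), p v u h.symm = (p u v h).reverse) ∧
  (∀ u v (h : G.Adj u v), ∀ x ∈ (p u v h).support,
      x ≠ f u → x ≠ f v → x ∉ Set.range f) ∧
  (∀ u v (h : G.Adj u v), ∀ u' v' (h' : G.Adj u' v'), s(u, v) ≠ s(u', v') →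
      ∀ x ∈ (p u v h).support, x ≠ f u → x ≠ f v →
        ∀ y ∈ (p u' v' h').support, y ≠ f u' → y ≠ f v' → x ≠ y) ∧
  (∀ x : W, x ∈ Set.range f ∨ ∃ u v, ∃ h : G.Adj u v, x ∈ (p u v h).support) ∧
  (∀ x y : W, H.Adj x y → ∃ u v, ∃ h : G.Adj u v, s(x, y) ∈ (p u v h).edges)

namespace Stmt9Aux

variable {V : Type} {G : SimpleGraph V}

lemma edgeEnd {a b : V} (q : G.Walk a b) (hq : q.IsPath) (he : s(a, b) ∈ q.edges) :
    q.length = 1 := by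
  cases q with
  | nil => simp at he
  | cons h r =>
    rename_i x
    rw [Walk.edges_cons, List.mem_cons] at he
    rcases he with he | he
    · have := Sym2.eq_iff.mp he
      rcases this with ⟨-, rfl⟩ | ⟨h1, h2⟩
      · have : r = Walk.nil := Walk.isPath_iff_eq_nil.mp ((Walk.cons_isPath_iff h r).mp hq).1
        subst this; rfl
      · exact absurd h1 h.ne
    · have : a ∈ r.support := r.fst_mem_support_of_mem_edges he
      exact absurd this ((Walk.cons_isPath_iff h r).mp hq).2

lemma pathPlusEdge {a u : V} (q : G.Walk a u) (hq : q.IsPath) (hl : 2 ≤ q.length)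
    (h : G.Adj u a) : (q.append (Walk.cons h Walk.nil)).IsCycle := by
  rw [Walk.isCycle_def]
  refine ⟨⟨?_⟩, ?_, ?_⟩
  · rw [Walk.edges_append, Walk.edges_cons, Walk.edges_nil]
    rw [List.nodup_append]
    refine ⟨hq.edges_nodup, List.nodup_singleton _, ?_⟩
    intro e he e' he' hee'
    simp only [List.mem_singleton] at he'
    subst he' hee'
    have : s(a, u) ∈ q.edges := by rwa [Sym2.eq_swap]
    have := edgeEnd q hq this
    omega
  · intro hn
    have := congrArg Walk.length hn
    rw [Walk.length_append] at this
    simp at this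
  · rw [Walk.tail_support_append]
    have hsupp : q.support = a :: q.support.tail := q.support_eq_cons
    have hnd : q.support.Nodup := hq.support_nodup
    rw [hsupp, List.nodup_cons] at hnd
    simp only [Walk.support_cons, Walk.support_nil, List.tail_cons]
    rw [List.nodup_append]
    exact ⟨hnd.2, List.nodup_singleton _, by
      intro x hx x' hx' hxx'
      simp only [List.mem_singleton] at hx'
      subst hx' hxx'
      exact hnd.1 hx⟩

end Stmt9Aux

namespace Stmt9Aux

variable {V : Type} {G : SimpleGraph V}

lemma arcs {a b : V} (C : G.Walk a a) (hC : C.IsCycle) (hb : b ∈ C.support) (hba : b ≠ a) :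
    ∃ (q1 : G.Walk a b) (q2 : G.Walk b a),
      q1.IsPath ∧ q2.IsPath ∧ q1.length + q2.length = C.length ∧
      1 ≤ q1.length ∧ 1 ≤ q2.length ∧
      (∀ x ∈ q1.support, x ∈ C.support) ∧ (∀ x ∈ q2.support, x ∈ C.support) ∧
      C.getVert q1.length = b := by
  classical
  set q1 := C.takeUntil b hb with hq1
  set q2 := C.dropUntil b hb with hq2
  have hspec : q1.append q2 = C := C.take_spec hb
  have hlen : q1.length + q2.length = C.length := by
    have := congrArg Walk.length hspec
    rwa [Walk.length_append] at this
  have hl1 : 1 ≤ q1.length := by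
    rcases Nat.eq_zero_or_pos q1.length with h0 | h0
    · exact absurd (Walk.eq_of_length_eq_zero h0) (Ne.symm hba)
    · exact h0
  have hl2 : 1 ≤ q2.length := by
    rcases Nat.eq_zero_or_pos q2.length with h0 | h0
    · exact absurd (Walk.eq_of_length_eq_zero h0) hba
    · exact h0
  have hsupp : C.support = q1.support ++ q2.support.tail := by
    conv_lhs => rw [← hspec]
    exact Walk.support_append _ _
  have htails : C.support.tail = q1.support.tail ++ q2.support.tail := by
    have h1 : C.support = a :: C.support.tail := C.support_eq_cons
    have h2 : q1.support = a :: q1.support.tail := q1.support_eq_cons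
    rw [h1, h2, List.cons_append] at hsupp
    exact List.cons_injective.eq_iff.mp hsupp
  have hnd : (q1.support.tail ++ q2.support.tail).Nodup := htails ▸ hC.support_nodup
  rw [List.nodup_append] at hnd
  obtain ⟨hnd1, hnd2, hdisj⟩ := hnd
  have haq2 : a ∈ q2.support.tail := by
    have := q2.end_mem_support
    rw [q2.support_eq_cons, List.mem_cons] at this
    exact this.resolve_left hba.symm
  have hbq1 : b ∈ q1.support.tail := by
    have := q1.end_mem_support
    rw [q1.support_eq_cons, List.mem_cons] at this
    exact this.resolve_left hba
  have hp1 : q1.IsPath := by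
    rw [Walk.isPath_def, q1.support_eq_cons, List.nodup_cons]
    exact ⟨fun ha => hdisj _ ha _ haq2 rfl, hnd1⟩
  have hp2 : q2.IsPath := by
    rw [Walk.isPath_def, q2.support_eq_cons, List.nodup_cons]
    exact ⟨fun hbb => hdisj _ hbq1 _ hbb rfl, hnd2⟩
  have hgv : C.getVert q1.length = b := by
    conv_lhs => rw [← hspec]
    rw [Walk.getVert_append]
    simp
  exact ⟨q1, q2, hp1, hp2, hlen, hl1, hl2,
    fun x hx => C.support_takeUntil_subset hb hx,
    fun x hx => C.support_dropUntil_subset hb hx, hgv⟩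

end Stmt9Aux

namespace Stmt9Aux

variable {V : Type} {G : SimpleGraph V}

lemma mem_support_tail_of_closed {a : V} (C : G.Walk a a) (hC : ¬ C.Nil) :
    a ∈ C.support.tail := by
  cases C with
  | nil => exact absurd Walk.Nil.nil hC
  | cons h q =>
    rw [Walk.support_cons, List.tail_cons]
    exact q.end_mem_support

lemma mem_support_closed_iff {a : V} (C : G.Walk a a) (hC : ¬ C.Nil) (x : V) :
    x ∈ C.support ↔ x ∈ C.support.tail := by
  constructor
  · intro hx
    rw [C.support_eq_cons, List.mem_cons] at hx
    rcases hx with rfl | hx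
    · exact mem_support_tail_of_closed C hC
    · exact hx
  · intro hx
    rw [C.support_eq_cons]
    exact List.mem_cons_of_mem _ hx

lemma length_rotate' [DecidableEq V] {a u : V} (C : G.Walk a a) (h : u ∈ C.support) :
    (C.rotate u h).length = C.length := by
  classical
  have hd := C.rotate_darts u h
  have := hd.perm.length_eq
  rwa [Walk.length_darts, Walk.length_darts] at this

lemma mem_support_rotate_iff [DecidableEq V] {a u : V} (C : G.Walk a a) (hC : ¬ C.Nil) (h : u ∈ C.support)
    (x : V) : x ∈ (C.rotate u h).support ↔ x ∈ C.support := by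
  classical
  have hnil : ¬ (C.rotate u h).Nil := by
    rw [Walk.nil_iff_length_eq, length_rotate' C h]
    exact fun hh => hC (Walk.nil_iff_length_eq.mpr hh)
  rw [mem_support_closed_iff _ hnil, mem_support_closed_iff _ hC]
  exact (C.support_rotate u h).mem_iff

end Stmt9Aux

namespace Stmt9Aux

variable {V : Type} {G : SimpleGraph V} [DecidableEq V]

/-- Outside-vertex lemma: if `v ∉ C` has two distinct neighbours on a minimum-length
cycle `C` (among cycles with support in `B`), then `C.length ≤ 4`. -/
lemma outside_two_neighbors {a v a1 a2 : V} {B : Finset V}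
    (C : G.Walk a a) (hC : C.IsCycle) (hCB : ∀ x ∈ C.support, x ∈ B)
    (hmin : ∀ (a' : V) (Z : G.Walk a' a'), Z.IsCycle → (∀ x ∈ Z.support, x ∈ B) →
      C.length ≤ Z.length)
    (hvB : v ∈ B) (hvC : v ∉ C.support)
    (h1 : G.Adj v a1) (h2 : G.Adj v a2) (h12 : a1 ≠ a2)
    (ha1 : a1 ∈ C.support) (ha2 : a2 ∈ C.support) : C.length ≤ 4 := by
  have hCnil : ¬ C.Nil := hC.isCircuit.not_nil
  set C1 := C.rotate a1 ha1 with hC1def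
  have hC1 : C1.IsCycle := hC.rotate ha1
  have hC1mem : ∀ x, x ∈ C1.support ↔ x ∈ C.support :=
    mem_support_rotate_iff C hCnil ha1
  have hC1B : ∀ x ∈ C1.support, x ∈ B := fun x hx => hCB x ((hC1mem x).mp hx)
  have hC1len : C1.length = C.length := length_rotate' C ha1
  have ha2' : a2 ∈ C1.support := (hC1mem a2).mpr ha2
  obtain ⟨q1, q2, hp1, hp2, hlen, hl1, hl2, hs1, hs2, -⟩ :=
    arcs C1 hC1 ha2' (Ne.symm h12)
  -- first cycle through v and q1
  have hvq1 : v ∉ q1.support := fun hx => hvC ((hC1mem v).mp (hs1 v hx))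
  have hvq2 : v ∉ q2.support := fun hx => hvC ((hC1mem v).mp (hs2 v hx))
  have hr1 : (Walk.cons h1 q1).IsPath := hp1.cons hvq1
  have hr2 : (Walk.cons h2 q2).IsPath := hp2.cons hvq2
  have hZ1 : ((Walk.cons h1 q1).append (Walk.cons h2.symm Walk.nil)).IsCycle := by
    refine pathPlusEdge _ hr1 ?_ h2.symm
    rw [Walk.length_cons]; omega
  have hZ2 : ((Walk.cons h2 q2).append (Walk.cons h1.symm Walk.nil)).IsCycle := by
    refine pathPlusEdge _ hr2 ?_ h1.symm
    rw [Walk.length_cons]; omega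
  have hZ1B : ∀ x ∈ ((Walk.cons h1 q1).append (Walk.cons h2.symm Walk.nil)).support,
      x ∈ B := by
    intro x hx
    rw [Walk.mem_support_append_iff] at hx
    rcases hx with hx | hx
    · rw [Walk.support_cons, List.mem_cons] at hx
      rcases hx with rfl | hx
      · exact hvB
      · exact hCB x ((hC1mem x).mp (hs1 x hx))
    · rw [Walk.support_cons, Walk.support_nil, List.mem_cons, List.mem_singleton] at hx
      rcases hx with rfl | rfl
      · exact hCB x ((hC1mem x).mp ha2')
      · exact hvB
  have hZ2B : ∀ x ∈ ((Walk.cons h2 q2).append (Walk.cons h1.symm Walk.nil)).support,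
      x ∈ B := by
    intro x hx
    rw [Walk.mem_support_append_iff] at hx
    rcases hx with hx | hx
    · rw [Walk.support_cons, List.mem_cons] at hx
      rcases hx with rfl | hx
      · exact hvB
      · exact hCB x ((hC1mem x).mp (hs2 x hx))
    · rw [Walk.support_cons, Walk.support_nil, List.mem_cons, List.mem_singleton] at hx
      rcases hx with rfl | rfl
      · exact hCB _ ha1
      · exact hvB
  have hb1 := hmin _ _ hZ1 hZ1B
  have hb2 := hmin _ _ hZ2 hZ2B
  rw [Walk.length_append, Walk.length_cons, Walk.length_cons, Walk.length_nil] at hb1 hb2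
  omega

/-- Chord lemma: any neighbour of the basepoint of a minimum cycle lying on the cycle
is one of the two cycle-neighbours of the basepoint. -/
lemma chord_lemma {a b : V} {B : Finset V}
    (C : G.Walk a a) (hC : C.IsCycle) (hCB : ∀ x ∈ C.support, x ∈ B)
    (hmin : ∀ (a' : V) (Z : G.Walk a' a'), Z.IsCycle → (∀ x ∈ Z.support, x ∈ B) →
      C.length ≤ Z.length)
    (hb : b ∈ C.support) (hadj : G.Adj a b) :
    b = C.getVert 1 ∨ b = C.getVert (C.length - 1) := by
  obtain ⟨q1, q2, hp1, hp2, hlen, hl1, hl2, hs1, hs2, hgv⟩ :=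
    arcs C hC hb hadj.ne'
  rcases Nat.lt_or_ge q1.length 2 with hd | hd
  · left
    have : q1.length = 1 := by omega
    rw [← this, hgv]
  · right
    have hZ : (q1.append (Walk.cons hadj.symm Walk.nil)).IsCycle :=
      pathPlusEdge _ hp1 hd hadj.symm
    have hZB : ∀ x ∈ (q1.append (Walk.cons hadj.symm Walk.nil)).support, x ∈ B := by
      intro x hx
      rw [Walk.mem_support_append_iff] at hx
      rcases hx with hx | hx
      · exact hCB x (hs1 x hx)
      · rw [Walk.support_cons, Walk.support_nil, List.mem_cons, List.mem_singleton] at hx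
        rcases hx with rfl | rfl
        · exact hCB x hb
        · exact hCB x C.start_mem_support
    have hbnd := hmin _ _ hZ hZB
    rw [Walk.length_append, Walk.length_cons, Walk.length_nil] at hbnd
    have : q1.length = C.length - 1 := by omega
    rw [← this, hgv]

end Stmt9Aux

namespace Stmt9Aux

variable {V : Type} {G : SimpleGraph V} [DecidableEq V]

lemma getVert_takeUntil {x y u : V} (w : G.Walk x y) (hu : u ∈ w.support) :
    w.getVert (w.takeUntil u hu).length = u := by
  have key : ∀ (w' : G.Walk x y),
      w' = (w.takeUntil u hu).append (w.dropUntil u hu) →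
      w'.getVert (w.takeUntil u hu).length = u := by
    intro w' hw'
    subst hw'
    rw [Walk.getVert_append]
    simp
  exact key w (w.take_spec hu).symm

lemma exists_cycle_minDeg [Fintype V] [DecidableRel G.Adj] {B : Finset V}
    (hne : B.Nonempty) (hdeg : ∀ v ∈ B, 2 ≤ (B.filter (G.Adj v)).card) :
    ∃ (a : V) (C : G.Walk a a), C.IsCycle ∧ ∀ x ∈ C.support, x ∈ B := by
  classical
  set P : ℕ → Prop := fun n => ∃ (x y : V) (w : G.Walk x y), w.IsPath ∧
    (∀ z ∈ w.support, z ∈ B) ∧ w.length = n with hPdef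
  obtain ⟨v, hv⟩ := hne
  have hP0 : P 0 := ⟨v, v, Walk.nil, Walk.IsPath.nil, by simp [hv], rfl⟩
  set N := Nat.findGreatest P (Fintype.card V) with hNdef
  have hPN : P N := Nat.findGreatest_spec (Nat.zero_le _) hP0
  obtain ⟨x, y, w, hp, hwB, hwlen⟩ := hPN
  -- every B-neighbour of x lies on w
  have hnbr : ∀ u, u ∈ B.filter (G.Adj x) → u ∈ w.support := by
    intro u hu
    rw [Finset.mem_filter] at hu
    by_contra hmem
    have hw' : (Walk.cons hu.2.symm w).IsPath := hp.cons hmem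
    have hP' : P (N + 1) := ⟨u, y, Walk.cons hu.2.symm w, hw',
      by
        intro z hz
        rw [Walk.support_cons, List.mem_cons] at hz
        rcases hz with rfl | hz
        · exact hu.1
        · exact hwB z hz,
      by rw [Walk.length_cons, hwlen]⟩
    have hlt : N + 1 ≤ Fintype.card V := by
      have := hw'.length_lt
      rw [Walk.length_cons, hwlen] at this
      omega
    exact Nat.findGreatest_is_greatest (Nat.lt_succ_self N) hlt hP'
  have hxB : x ∈ B := hwB x w.start_mem_support
  obtain ⟨u1, hu1, u2, hu2, h12⟩ := Finset.one_lt_card.mp (hdeg x hxB)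
  have hadj1 : G.Adj x u1 := (Finset.mem_filter.mp hu1).2
  have hadj2 : G.Adj x u2 := (Finset.mem_filter.mp hu2).2
  cases w with
  | nil =>
    exfalso
    have := hnbr u1 hu1
    rw [Walk.support_nil, List.mem_singleton] at this
    exact hadj1.ne this.symm
  | cons h q =>
    rename_i sb
    -- pick a neighbour distinct from the second vertex sb
    obtain ⟨u, huf, husb⟩ : ∃ u, u ∈ B.filter (G.Adj x) ∧ u ≠ q.getVert 0 := by
      by_cases h1 : u1 = q.getVert 0
      · exact ⟨u2, hu2, by rw [← h1]; exact h12.symm⟩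
      · exact ⟨u1, hu1, h1⟩
    have hadjxu : G.Adj x u := (Finset.mem_filter.mp huf).2
    have humem : u ∈ (Walk.cons h q).support := hnbr u huf
    set r := (Walk.cons h q).takeUntil u humem with hrdef
    have hrp : r.IsPath := hp.takeUntil humem
    have hrB : ∀ z ∈ r.support, z ∈ B := fun z hz =>
      hwB z ((Walk.cons h q).support_takeUntil_subset humem hz)
    have hrlen : 2 ≤ r.length := by
      have hgv : (Walk.cons h q).getVert r.length = u := getVert_takeUntil _ humem
      rcases Nat.lt_or_ge r.length 2 with hlt | hge
      · interval_cases hh : r.length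
        · exact absurd (Walk.eq_of_length_eq_zero hh) hadjxu.ne
        · exfalso
          simp only [Walk.getVert_cons_succ] at hgv
          exact husb hgv.symm
      · exact hge
    refine ⟨x, r.append (Walk.cons hadjxu.symm Walk.nil),
      pathPlusEdge r hrp hrlen hadjxu.symm, ?_⟩
    intro z hz
    rw [Walk.mem_support_append_iff] at hz
    rcases hz with hz | hz
    · exact hrB z hz
    · rw [Walk.support_cons, Walk.support_nil, List.mem_cons, List.mem_singleton] at hz
      rcases hz with rfl | rfl
      · exact hrB _ r.end_mem_support
      · exact hxB

end Stmt9Aux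

namespace Stmt9Aux

variable {V : Type} {G : SimpleGraph V} [DecidableEq V]

lemma support_toFinset_card {a : V} (C : G.Walk a a) (hC : C.IsCycle) :
    C.support.toFinset.card = C.length := by
  have hnil : ¬ C.Nil := hC.isCircuit.not_nil
  have h1 : C.support.toFinset = C.support.tail.toFinset := by
    ext z
    simp only [List.mem_toFinset]
    exact mem_support_closed_iff C hnil z
  rw [h1, List.toFinset_card_of_nodup hC.support_nodup]
  have := C.length_support
  have ht := congrArg List.length C.support_eq_cons
  rw [this] at ht
  simp only [List.length_cons] at ht
  omega

lemma disjoint_cycles [Fintype V] [DecidableRel G.Adj] :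
    ∀ (k : ℕ) (B : Finset V), (∀ v ∈ B, 4 * k ≤ (B.filter (G.Adj v)).card) →
    (k ≠ 0 → B.Nonempty) →
    ∃ cyc : Fin k → (Σ a : V, G.Walk a a),
      (∀ i, (cyc i).2.IsCycle) ∧ (∀ i, ∀ x ∈ (cyc i).2.support, x ∈ B) ∧
      (∀ i j, i ≠ j → ∀ x ∈ (cyc i).2.support, x ∉ (cyc j).2.support) := by
  intro k
  induction k with
  | zero =>
    intro B _ _
    exact ⟨fun i => i.elim0, fun i => i.elim0, fun i => i.elim0, fun i j _ => i.elim0⟩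
  | succ k ih =>
    intro B hdeg hne
    have hBne : B.Nonempty := hne (Nat.succ_ne_zero k)
    have hdeg2 : ∀ v ∈ B, 2 ≤ (B.filter (G.Adj v)).card := by
      intro v hv
      have := hdeg v hv
      omega
    have hex : ∃ n, ∃ (a : V) (C : G.Walk a a), C.IsCycle ∧
        (∀ x ∈ C.support, x ∈ B) ∧ C.length = n := by
      obtain ⟨a, C, hC, hCB⟩ := exists_cycle_minDeg hBne hdeg2
      exact ⟨C.length, a, C, hC, hCB, rfl⟩
    classical
    obtain ⟨a, C, hC, hCB, hClen⟩ := Nat.find_spec hex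
    have hmin : ∀ (a' : V) (Z : G.Walk a' a'), Z.IsCycle →
        (∀ x ∈ Z.support, x ∈ B) → C.length ≤ Z.length := by
      intro a' Z hZ hZB
      rw [hClen]
      exact Nat.find_min' hex ⟨a', Z, hZ, hZB, rfl⟩
    set B' := B \ C.support.toFinset with hB'def
    have hinter : ∀ v ∈ B', ((B.filter (G.Adj v)) ∩ C.support.toFinset).card ≤ 4 := by
      intro v hv
      rcases le_or_gt C.length 4 with h4 | h4
      · calc ((B.filter (G.Adj v)) ∩ C.support.toFinset).card
            ≤ C.support.toFinset.card := Finset.card_le_card Finset.inter_subset_right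
          _ = C.length := support_toFinset_card C hC
          _ ≤ 4 := h4
      · have hcard1 : ((B.filter (G.Adj v)) ∩ C.support.toFinset).card ≤ 1 := by
          by_contra hgt
          push_neg at hgt
          obtain ⟨a1, ha1, a2, ha2, h12⟩ := Finset.one_lt_card.mp hgt
          rw [Finset.mem_inter, Finset.mem_filter, List.mem_toFinset] at ha1 ha2
          rw [Finset.mem_sdiff] at hv
          have hvC : v ∉ C.support := fun hc => hv.2 (List.mem_toFinset.mpr hc)
          have := outside_two_neighbors C hC hCB hmin hv.1 hvC
            ha1.1.2 ha2.1.2 h12 ha1.2 ha2.2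
          omega
        omega
    have hdeg' : ∀ v ∈ B', 4 * k ≤ (B'.filter (G.Adj v)).card := by
      intro v hv
      have hsub : (B.filter (G.Adj v)) \ C.support.toFinset ⊆ B'.filter (G.Adj v) := by
        intro z hz
        rw [Finset.mem_sdiff, Finset.mem_filter] at hz
        rw [Finset.mem_filter, hB'def, Finset.mem_sdiff]
        exact ⟨⟨hz.1.1, hz.2⟩, hz.1.2⟩
      have h1 : ((B.filter (G.Adj v)) \ C.support.toFinset).card +
          ((B.filter (G.Adj v)) ∩ C.support.toFinset).card = (B.filter (G.Adj v)).card :=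
        Finset.card_sdiff_add_card_inter _ _
      have h2 := Finset.card_le_card hsub
      have h3 := hdeg v (Finset.mem_sdiff.mp hv).1
      have h4 := hinter v hv
      omega
    have hne' : k ≠ 0 → B'.Nonempty := by
      intro hk
      by_contra hBe
      rw [Finset.not_nonempty_iff_eq_empty, hB'def, Finset.sdiff_eq_empty_iff_subset] at hBe
      have haB : a ∈ B := hCB a C.start_mem_support
      have hsub2 : B.filter (G.Adj a) ⊆ {C.getVert 1, C.getVert (C.length - 1)} := by
        intro b hb
        rw [Finset.mem_filter] at hb
        have hbC : b ∈ C.support := List.mem_toFinset.mp (hBe hb.1)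
        have := chord_lemma C hC hCB hmin hbC hb.2
        rw [Finset.mem_insert, Finset.mem_singleton]
        exact this
      have hle := Finset.card_le_card hsub2
      have hcard2 : ({C.getVert 1, C.getVert (C.length - 1)} : Finset V).card ≤ 2 :=
        Finset.card_insert_le _ _ |>.trans (by simp)
      have := hdeg a haB
      omega
    obtain ⟨cyc', hcyc1, hcyc2, hcyc3⟩ := ih B' hdeg' hne'
    refine ⟨Fin.cons ⟨a, C⟩ cyc', ?_, ?_, ?_⟩
    · intro i
      induction i using Fin.cases with
      | zero => exact hC
      | succ i => exact hcyc1 i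
    · intro i
      induction i using Fin.cases with
      | zero => exact hCB
      | succ i =>
        intro x hx
        exact (Finset.mem_sdiff.mp (hcyc2 i x hx)).1
    · intro i j hij
      induction i using Fin.cases with
      | zero =>
        induction j using Fin.cases with
        | zero => exact absurd rfl hij
        | succ j =>
          intro x hx hx'
          have := (Finset.mem_sdiff.mp (hcyc2 j x hx')).2
          exact this (List.mem_toFinset.mpr hx)
      | succ i =>
        induction j using Fin.cases with
        | zero =>
          intro x hx hx'
          have := (Finset.mem_sdiff.mp (hcyc2 i x hx)).2
          exact this (List.mem_toFinset.mpr hx')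
        | succ j =>
          intro x hx hx'
          exact hcyc3 i j (fun hh => hij (by rw [hh])) x hx hx'

end Stmt9Aux

namespace Stmt9Aux

variable {V : Type} {G : SimpleGraph V} [DecidableEq V]

lemma peel [DecidableRel G.Adj] (t : ℕ) (ht : 1 ≤ t) :
    ∀ (n : ℕ) (B : Finset V), B.card ≤ n → B.Nonempty →
    2 * t * B.card ≤ ∑ v ∈ B, (B.filter (G.Adj v)).card →
    ∃ B' : Finset V, B' ⊆ B ∧ B'.Nonempty ∧
      ∀ v ∈ B', t ≤ (B'.filter (G.Adj v)).card := by
  intro n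
  induction n with
  | zero =>
    intro B hB hne _
    obtain ⟨v, hv⟩ := hne
    have := Finset.card_pos.mpr ⟨v, hv⟩
    omega
  | succ n ih =>
    intro B hBn hne hsum
    by_cases hall : ∀ v ∈ B, t ≤ (B.filter (G.Adj v)).card
    · exact ⟨B, Finset.Subset.refl B, hne, hall⟩
    · push_neg at hall
      obtain ⟨v0, hv0, hv0deg⟩ := hall
      set B' := B.erase v0 with hB'def
      have hcard : B'.card + 1 = B.card := Finset.card_erase_add_one hv0
      have hsplit : (B.filter (G.Adj v0)).card + ∑ v ∈ B', (B.filter (G.Adj v)).card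
          = ∑ v ∈ B, (B.filter (G.Adj v)).card :=
        Finset.add_sum_erase B (fun v => (B.filter (G.Adj v)).card) hv0
      have hpoint : ∀ v ∈ B', (B.filter (G.Adj v)).card ≤
          (B'.filter (G.Adj v)).card + (if G.Adj v v0 then 1 else 0) := by
        intro v hv
        have hfe : B'.filter (G.Adj v) = (B.filter (G.Adj v)).erase v0 := by
          rw [hB'def, Finset.filter_erase]
        by_cases hadj : G.Adj v v0
        · have hv0f : v0 ∈ B.filter (G.Adj v) :=
            Finset.mem_filter.mpr ⟨hv0, hadj⟩
          have := Finset.card_erase_add_one hv0f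
          rw [← hfe] at this
          simp only [hadj, if_true]
          omega
        · have hv0f : v0 ∉ B.filter (G.Adj v) := by
            intro hmem
            exact hadj (Finset.mem_filter.mp hmem).2
          rw [hfe, Finset.erase_eq_of_notMem hv0f]
          simp
      have hsum' : ∑ v ∈ B', (B.filter (G.Adj v)).card ≤
          (∑ v ∈ B', (B'.filter (G.Adj v)).card) +
            (B'.filter (fun v => G.Adj v v0)).card := by
        calc ∑ v ∈ B', (B.filter (G.Adj v)).card
            ≤ ∑ v ∈ B', ((B'.filter (G.Adj v)).card + (if G.Adj v v0 then 1 else 0)) :=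
              Finset.sum_le_sum hpoint
          _ = (∑ v ∈ B', (B'.filter (G.Adj v)).card) +
                ∑ v ∈ B', (if G.Adj v v0 then 1 else 0) := Finset.sum_add_distrib
          _ = (∑ v ∈ B', (B'.filter (G.Adj v)).card) +
                (B'.filter (fun v => G.Adj v v0)).card := by
              rw [Finset.card_filter]
      have hback : (B'.filter (fun v => G.Adj v v0)).card ≤ (B.filter (G.Adj v0)).card := by
        apply Finset.card_le_card
        intro z hz
        rw [Finset.mem_filter] at hz ⊢
        exact ⟨Finset.mem_of_mem_erase hz.1, hz.2.symm⟩
      have hble : (B.filter (G.Adj v0)).card ≤ t - 1 := by omega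
      have hT : 2 * t * B.card = 2 * t * B'.card + 2 * t := by
        rw [← hcard, Nat.mul_add, Nat.mul_one]
      rw [hT] at hsum
      set X := 2 * t * B'.card with hX
      have hkey : X + 2 ≤ ∑ v ∈ B', (B'.filter (G.Adj v)).card := by omega
      have hB'ne : B'.Nonempty := by
        rw [← Finset.card_pos]
        by_contra hzero
        push_neg at hzero
        have hz : B'.card = 0 := by omega
        have hzero2 : ∑ v ∈ B', (B'.filter (G.Adj v)).card = 0 := by
          rw [Finset.card_eq_zero.mp hz]
          simp
        have hX0 : X = 0 := by rw [hX, hz, Nat.mul_zero]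
        omega
      have hsum'' : 2 * t * B'.card ≤ ∑ v ∈ B', (B'.filter (G.Adj v)).card := by
        rw [← hX]
        omega
      obtain ⟨B'', hsub, hne'', hdeg''⟩ := ih B' (by omega) hB'ne hsum''
      exact ⟨B'', hsub.trans (Finset.erase_subset _ _), hne'', hdeg''⟩

end Stmt9Aux

namespace Stmt9Aux

section Lift

variable {V W : Type} {G : SimpleGraph V} {H : SimpleGraph W} {f : V → W}

/-- Lift a walk of `G` to a walk of `H` through the subdivision paths. -/
def liftW (p : ∀ u v, G.Adj u v → H.Walk (f u) (f v)) :
    ∀ {a b : V}, G.Walk a b → H.Walk (f a) (f b)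
  | _, _, Walk.nil => Walk.nil
  | _, _, Walk.cons h q => (p _ _ h).append (liftW p q)

variable (p : ∀ u v, G.Adj u v → H.Walk (f u) (f v))

lemma liftW_nil {a : V} : liftW p (Walk.nil : G.Walk a a) = Walk.nil := rfl

lemma liftW_cons {a x b : V} (h : G.Adj a x) (q : G.Walk x b) :
    liftW p (Walk.cons h q) = (p a x h).append (liftW p q) := rfl

lemma liftW_support_tail {a b : V} (w : G.Walk a b) :
    (liftW p w).support.tail =
      (w.darts.map (fun d => (p d.fst d.snd d.adj).support.tail)).flatten := by
  induction w with
  | nil => simp [liftW]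
  | cons h q ih =>
    rw [liftW_cons, Walk.tail_support_append, ih]
    simp

lemma liftW_edges {a b : V} (w : G.Walk a b) :
    (liftW p w).edges =
      (w.darts.map (fun d => (p d.fst d.snd d.adj).edges)).flatten := by
  induction w with
  | nil => simp [liftW]
  | cons h q ih =>
    rw [liftW_cons, Walk.edges_append, ih]
    simp

lemma liftW_support_sub {a b : V} (w : G.Walk a b) :
    ∀ x ∈ (liftW p w).support, x = f b ∨
      ∃ d ∈ w.darts, x ∈ (p d.fst d.snd d.adj).support := by
  induction w with
  | nil =>
    intro x hx
    rw [liftW_nil, Walk.support_nil, List.mem_singleton] at hx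
    exact Or.inl hx
  | cons h q ih =>
    intro x hx
    rw [liftW_cons, Walk.mem_support_append_iff] at hx
    rcases hx with hx | hx
    · exact Or.inr ⟨⟨(_, _), h⟩, by simp [Walk.darts_cons], hx⟩
    · rcases ih x hx with h1 | ⟨d, hd, hxd⟩
      · exact Or.inl h1
      · exact Or.inr ⟨d, by simp [Walk.darts_cons, hd], hxd⟩

end Lift

end Stmt9Aux

namespace Stmt9Aux

section Lift2

variable {V W : Type} {G : SimpleGraph V} {H : SimpleGraph W} {f : V → W}
variable {p : ∀ u v, G.Adj u v → H.Walk (f u) (f v)}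

lemma sym2_from_two {α : Type} {a b x y : α} (hxy : x ≠ y)
    (hx : x = a ∨ x = b) (hy : y = a ∨ y = b) : s(x, y) = s(a, b) := by
  rcases hx with rfl | rfl <;> rcases hy with rfl | rfl
  · exact absurd rfl hxy
  · rfl
  · exact Sym2.eq_swap
  · exact absurd rfl hxy

lemma pathInter (hs : IsStrictSubdivision G H f p) {u1 v1 u2 v2 : V}
    (h1 : G.Adj u1 v1) (h2 : G.Adj u2 v2) (hne : s(u1, v1) ≠ s(u2, v2)) {x : W}
    (hx1 : x ∈ (p u1 v1 h1).support) (hx2 : x ∈ (p u2 v2 h2).support) :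
    ∃ z, x = f z ∧ (z = u1 ∨ z = v1) ∧ (z = u2 ∨ z = v2) := by
  obtain ⟨hinj, hpath, -, hint, hdis, -, -⟩ := hs
  by_cases hxa : x = f u1 ∨ x = f v1
  · by_cases hxb : x = f u2 ∨ x = f v2
    · rcases hxa with rfl | rfl
      · rcases hxb with heq | heq
        · exact ⟨u1, rfl, Or.inl rfl, Or.inl (hinj heq)⟩
        · exact ⟨u1, rfl, Or.inl rfl, Or.inr (hinj heq)⟩
      · rcases hxb with heq | heq
        · exact ⟨v1, rfl, Or.inr rfl, Or.inl (hinj heq)⟩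
        · exact ⟨v1, rfl, Or.inr rfl, Or.inr (hinj heq)⟩
    · push_neg at hxb
      exfalso
      rcases hxa with rfl | rfl
      · exact hint u2 v2 h2 _ hx2 hxb.1 hxb.2 (Set.mem_range_self u1)
      · exact hint u2 v2 h2 _ hx2 hxb.1 hxb.2 (Set.mem_range_self v1)
  · push_neg at hxa
    exfalso
    by_cases hxb : x = f u2 ∨ x = f v2
    · rcases hxb with rfl | rfl
      · exact hint u1 v1 h1 _ hx1 hxa.1 hxa.2 (Set.mem_range_self u2)
      · exact hint u1 v1 h1 _ hx1 hxa.1 hxa.2 (Set.mem_range_self v2)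
    · push_neg at hxb
      exact hdis u1 v1 h1 u2 v2 h2 hne x hx1 hxa.1 hxa.2 x hx2 hxb.1 hxb.2 rfl

lemma pathInterNe (hs : IsStrictSubdivision G H f p) {u1 v1 u2 v2 : V}
    (h1 : G.Adj u1 v1) (h2 : G.Adj u2 v2) (hne : s(u1, v1) ≠ s(u2, v2)) {x y : W}
    (hxy : x ≠ y)
    (hx1 : x ∈ (p u1 v1 h1).support) (hx2 : x ∈ (p u2 v2 h2).support)
    (hy1 : y ∈ (p u1 v1 h1).support) (hy2 : y ∈ (p u2 v2 h2).support) : False := by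
  obtain ⟨z1, hz1, hz1a, hz1b⟩ := pathInter hs h1 h2 hne hx1 hx2
  obtain ⟨z2, hz2, hz2a, hz2b⟩ := pathInter hs h1 h2 hne hy1 hy2
  have hz12 : z1 ≠ z2 := by
    intro hh
    exact hxy (by rw [hz1, hz2, hh])
  exact hne ((sym2_from_two hz12 hz1a hz2a).symm.trans (sym2_from_two hz12 hz1b hz2b))

lemma tail_fact {s t : W} (q : H.Walk s t) (hq : q.IsPath) {x : W}
    (hx : x ∈ q.support.tail) : x ∈ q.support ∧ x ≠ s := by
  have hsupp := q.support_eq_cons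
  have hnd := hq.support_nodup
  rw [hsupp, List.nodup_cons] at hnd
  constructor
  · rw [hsupp]
    exact List.mem_cons_of_mem _ hx
  · intro rfl1
    subst rfl1
    exact hnd.1 hx

lemma dart_hosts_ne (hs : IsStrictSubdivision G H f p) {a b : V}
    {C1 : G.Walk a a} {C2 : G.Walk b b}
    (hdisj : ∀ x ∈ C1.support, x ∉ C2.support)
    {d1 d2 : G.Dart} (hd1 : d1 ∈ C1.darts) (hd2 : d2 ∈ C2.darts) :
    s(d1.fst, d1.snd) ≠ s(d2.fst, d2.snd) := by
  intro hh
  have h1 : d1.fst ∈ C1.support := C1.dart_fst_mem_support_of_mem_darts hd1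
  have h2 : d2.fst ∈ C2.support := C2.dart_fst_mem_support_of_mem_darts hd2
  have h3 : d2.snd ∈ C2.support := C2.dart_snd_mem_support_of_mem_darts hd2
  rw [Sym2.eq_iff] at hh
  rcases hh with ⟨hq1, -⟩ | ⟨hq1, -⟩
  · refine hdisj d1.fst h1 ?_
    rw [hq1]
    exact h2
  · refine hdisj d1.fst h1 ?_
    rw [hq1]
    exact h3

lemma darts_pairwise {a : V} (C : G.Walk a a) (hC : C.IsCycle) :
    C.darts.Pairwise
      (fun d1 d2 => s(d1.fst, d1.snd) ≠ s(d2.fst, d2.snd) ∧ d1.snd ≠ d2.snd) := by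
  have hedges : C.edges.Nodup := hC.isCircuit.isTrail.edges_nodup
  rw [Walk.edges] at hedges
  have h1 : C.darts.Pairwise (fun d1 d2 => d1.edge ≠ d2.edge) :=
    List.pairwise_map.mp hedges
  have htail : C.support.tail.Nodup := hC.support_nodup
  rw [← Walk.map_snd_darts] at htail
  have h2 : C.darts.Pairwise (fun d1 d2 => d1.snd ≠ d2.snd) :=
    List.pairwise_map.mp htail
  refine (h1.and h2).imp ?_
  rintro d1 d2 ⟨he, hsnd⟩
  exact ⟨he, hsnd⟩

lemma liftW_isCycle (hs : IsStrictSubdivision G H f p) {a : V}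
    (C : G.Walk a a) (hC : C.IsCycle) : (liftW p C).IsCycle := by
  have hpath := hs.2.1
  have hPW := darts_pairwise C hC
  refine ⟨⟨⟨?_⟩, ?_⟩, ?_⟩
  · -- edges nodup
    rw [liftW_edges, List.nodup_flatten]
    constructor
    · intro l hl
      rw [List.mem_map] at hl
      obtain ⟨d, -, rfl⟩ := hl
      exact (hpath d.fst d.snd d.adj).1.isTrail.edges_nodup
    · rw [List.pairwise_map]
      refine hPW.imp ?_
      rintro d1 d2 ⟨hne, -⟩ e he1 he2
      induction e using Sym2.ind with
      | _ x y =>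
        have hadjxy : H.Adj x y := Walk.adj_of_mem_edges _ he1
        exact pathInterNe hs d1.adj d2.adj hne hadjxy.ne
          ((p d1.fst d1.snd d1.adj).fst_mem_support_of_mem_edges he1)
          ((p d2.fst d2.snd d2.adj).fst_mem_support_of_mem_edges he2)
          ((p d1.fst d1.snd d1.adj).snd_mem_support_of_mem_edges he1)
          ((p d2.fst d2.snd d2.adj).snd_mem_support_of_mem_edges he2)
  · -- not nil
    cases C with
    | nil => exact absurd rfl hC.isCircuit.ne_nil
    | cons h q =>
      intro hnil
      have hlen := congrArg Walk.length hnil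
      rw [liftW_cons, Walk.length_append] at hlen
      have := (hpath _ _ h).2
      simp only [Walk.length_nil] at hlen
      omega
  · -- support tail nodup
    rw [liftW_support_tail, List.nodup_flatten]
    constructor
    · intro l hl
      rw [List.mem_map] at hl
      obtain ⟨d, -, rfl⟩ := hl
      exact (hpath d.fst d.snd d.adj).1.support_nodup.sublist (List.tail_sublist _)
    · rw [List.pairwise_map]
      refine hPW.imp ?_
      rintro d1 d2 ⟨hne, hsnd⟩ x hx1 hx2
      obtain ⟨hx1s, hx1ne⟩ := tail_fact _ (hpath d1.fst d1.snd d1.adj).1 hx1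
      obtain ⟨hx2s, hx2ne⟩ := tail_fact _ (hpath d2.fst d2.snd d2.adj).1 hx2
      obtain ⟨z, hz, hza, hzb⟩ := pathInter hs d1.adj d2.adj hne hx1s hx2s
      have hz1 : z = d1.snd := by
        rcases hza with rfl | rfl
        · exact absurd hz hx1ne
        · rfl
      have hz2 : z = d2.snd := by
        rcases hzb with rfl | rfl
        · exact absurd hz hx2ne
        · rfl
      exact hsnd (hz1 ▸ hz2 ▸ rfl)

end Lift2

end Stmt9Aux

namespace Stmt9Aux

section Lift3

variable {V W : Type} {G : SimpleGraph V} {H : SimpleGraph W} {f : V → W}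
variable {p : ∀ u v, G.Adj u v → H.Walk (f u) (f v)}

lemma liftW_support_sub' {a : V} (C : G.Walk a a) (hC : C.IsCycle) :
    ∀ x ∈ (liftW p C).support, ∃ d ∈ C.darts, x ∈ (p d.fst d.snd d.adj).support := by
  cases C with
  | nil => exact absurd rfl hC.isCircuit.ne_nil
  | cons h q =>
    intro x hx
    rcases liftW_support_sub p _ x hx with rfl | ⟨d, hd, hxd⟩
    · exact ⟨⟨(_, _), h⟩, by simp [Walk.darts_cons], Walk.start_mem_support _⟩
    · exact ⟨d, hd, hxd⟩

lemma dart_end_mem_support {a : V} {C : G.Walk a a} {d : G.Dart} (hd : d ∈ C.darts)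
    {z : V} (hz : z = d.fst ∨ z = d.snd) : z ∈ C.support := by
  rcases hz with rfl | rfl
  · exact C.dart_fst_mem_support_of_mem_darts hd
  · exact C.dart_snd_mem_support_of_mem_darts hd

lemma lift_indep (hs : IsStrictSubdivision G H f p) {a b : V}
    {Ci : G.Walk a a} {Cj : G.Walk b b} (hCi : Ci.IsCycle) (hCj : Cj.IsCycle)
    (hdisj : ∀ x ∈ Ci.support, x ∉ Cj.support) :
    ∀ x ∈ (liftW p Ci).support, ∀ y ∈ (liftW p Cj).support, x ≠ y ∧ ¬ H.Adj x y := by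
  intro x hx y hy
  obtain ⟨d1, hd1, hx1⟩ := liftW_support_sub' Ci hCi x hx
  obtain ⟨d2, hd2, hy2⟩ := liftW_support_sub' Cj hCj y hy
  have hostne : s(d1.fst, d1.snd) ≠ s(d2.fst, d2.snd) := dart_hosts_ne hs hdisj hd1 hd2
  constructor
  · rintro rfl
    obtain ⟨z, hz, hza, hzb⟩ := pathInter hs d1.adj d2.adj hostne hx1 hy2
    exact hdisj z (dart_end_mem_support hd1 hza) (dart_end_mem_support hd2 hzb)
  · intro hadj
    obtain ⟨u, v, h, he⟩ := hs.2.2.2.2.2.2 x y hadj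
    have hxQ : x ∈ (p u v h).support := Walk.fst_mem_support_of_mem_edges _ he
    have hyQ : y ∈ (p u v h).support := Walk.snd_mem_support_of_mem_edges _ he
    have huv_mem1 : s(u, v) = s(d1.fst, d1.snd) →
        ∀ z, (z = u ∨ z = v) → z ∈ Ci.support := by
      intro hc z hz
      rw [Sym2.eq_iff] at hc
      refine dart_end_mem_support hd1 ?_
      rcases hc with ⟨hu, hv⟩ | ⟨hu, hv⟩ <;> rcases hz with rfl | rfl
      · exact Or.inl hu
      · exact Or.inr hv
      · exact Or.inr hu
      · exact Or.inl hv
    have huv_mem2 : s(u, v) = s(d2.fst, d2.snd) →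
        ∀ z, (z = u ∨ z = v) → z ∈ Cj.support := by
      intro hc z hz
      rw [Sym2.eq_iff] at hc
      refine dart_end_mem_support hd2 ?_
      rcases hc with ⟨hu, hv⟩ | ⟨hu, hv⟩ <;> rcases hz with rfl | rfl
      · exact Or.inl hu
      · exact Or.inr hv
      · exact Or.inr hu
      · exact Or.inl hv
    by_cases hc1 : s(u, v) = s(d1.fst, d1.snd) <;>
      by_cases hc2 : s(u, v) = s(d2.fst, d2.snd)
    · exact hostne (hc1.symm.trans hc2)
    · obtain ⟨z, hz, hza, hzb⟩ := pathInter hs h d2.adj hc2 hyQ hy2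
      exact hdisj z (huv_mem1 hc1 z hza) (dart_end_mem_support hd2 hzb)
    · obtain ⟨z, hz, hza, hzb⟩ := pathInter hs h d1.adj hc1 hxQ hx1
      exact hdisj z (dart_end_mem_support hd1 hzb) (huv_mem2 hc2 z hza)
    · obtain ⟨z1, hz1, hz1a, hz1b⟩ := pathInter hs h d1.adj hc1 hxQ hx1
      obtain ⟨z2, hz2, hz2a, hz2b⟩ := pathInter hs h d2.adj hc2 hyQ hy2
      have hz12 : z1 ≠ z2 := by
        intro hh
        refine hdisj z1 (dart_end_mem_support hd1 hz1b) ?_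
        rw [hh]
        exact dart_end_mem_support hd2 hz2b
      have hxy : x ≠ y := hadj.ne
      have hfz : s(x, y) = s(f u, f v) := by
        rw [hz1, hz2]
        refine sym2_from_two (fun hh => hxy (by rw [hz1, hz2, hh])) ?_ ?_
        · rcases hz1a with rfl | rfl
          · exact Or.inl rfl
          · exact Or.inr rfl
        · rcases hz2a with rfl | rfl
          · exact Or.inl rfl
          · exact Or.inr rfl
      rw [hfz] at he
      have := edgeEnd (p u v h) (hs.2.1 u v h).1 he
      have h2 := (hs.2.1 u v h).2
      omega

end Lift3

end Stmt9Aux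

/-- There is a constant `c > 0` such that for every `k ≥ 2`: if `G`
has at least one vertex and average degree at least `c * k * log k`, then every strict
subdivision of `G` contains `k` pairwise independent cycles. -/
theorem stmt9 :
    ∃ c : ℝ, 0 < c ∧
      ∀ (k : ℕ), 2 ≤ k →
        ∀ (V W : Type) [Fintype V] [Fintype W] [Nonempty V]
          (G : SimpleGraph V) (H : SimpleGraph W)
          (f : V → W) (p : ∀ u v, G.Adj u v → H.Walk (f u) (f v)),
          IsStrictSubdivision G H f p →
          c * k * Real.log k * (Fintype.card V : ℝ) ≤ 2 * (Nat.card G.edgeSet : ℝ) →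
          HasIndepCycles H k := by
  refine ⟨12, by norm_num, ?_⟩
  intro k hk V W _ _ _ G H f p hs havg
  classical
  have hlog2 : (2 : ℝ) / 3 ≤ Real.log 2 := by
    have := Real.log_two_gt_d9
    norm_num at this ⊢
    linarith
  have hlogk : Real.log 2 ≤ Real.log k :=
    Real.log_le_log (by norm_num) (by exact_mod_cast hk)
  have hk0 : (0 : ℝ) ≤ (k : ℝ) := Nat.cast_nonneg k
  have hklog : (8 : ℝ) * k ≤ 12 * k * Real.log k := by nlinarith
  have hcard0 : (0 : ℝ) ≤ (Fintype.card V : ℝ) := Nat.cast_nonneg _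
  have hreal : (8 : ℝ) * k * (Fintype.card V : ℝ) ≤ 2 * (Nat.card G.edgeSet : ℝ) := by
    calc (8 : ℝ) * k * (Fintype.card V : ℝ)
        ≤ 12 * k * Real.log k * (Fintype.card V : ℝ) :=
          mul_le_mul_of_nonneg_right hklog hcard0
      _ ≤ 2 * (Nat.card G.edgeSet : ℝ) := havg
  have hnat : 8 * k * Fintype.card V ≤ 2 * Nat.card G.edgeSet := by exact_mod_cast hreal
  letI : DecidableRel G.Adj := Classical.decRel _
  have hdegsum : ∑ v ∈ (Finset.univ : Finset V), ((Finset.univ : Finset V).filter (G.Adj v)).card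
      = 2 * Nat.card G.edgeSet := by
    have h1 : ∀ v : V, ((Finset.univ : Finset V).filter (G.Adj v)).card = G.degree v := by
      intro v
      have h2 : (Finset.univ : Finset V).filter (G.Adj v) = G.neighborFinset v := by
        ext w
        simp [SimpleGraph.mem_neighborFinset]
      rw [h2]
      rfl
    rw [Finset.sum_congr rfl (fun v _ => h1 v), SimpleGraph.sum_degrees_eq_twice_card_edges]
    have h3 : Nat.card G.edgeSet = G.edgeFinset.card := by
      rw [Nat.card_coe_set_eq, Set.ncard_eq_toFinset_card']
      exact congrArg Finset.card (by ext e; simp)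
    rw [h3]
  have ht : 1 ≤ 4 * k := by omega
  have hsum : 2 * (4 * k) * (Finset.univ : Finset V).card ≤
      ∑ v ∈ (Finset.univ : Finset V), ((Finset.univ : Finset V).filter (G.Adj v)).card := by
    rw [hdegsum, Finset.card_univ]
    have h4 : 2 * (4 * k) * Fintype.card V = 8 * k * Fintype.card V := by ring
    rw [h4]
    exact hnat
  obtain ⟨B, hBsub, hBne, hBdeg⟩ := Stmt9Aux.peel (4 * k) ht (Fintype.card V)
    Finset.univ (le_of_eq Finset.card_univ) Finset.univ_nonempty hsum
  obtain ⟨cyc, hcyc1, hcyc2, hcyc3⟩ := Stmt9Aux.disjoint_cycles k B hBdeg (fun _ => hBne)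
  refine ⟨fun i => f (cyc i).1, fun i => Stmt9Aux.liftW p (cyc i).2,
    fun i => Stmt9Aux.liftW_isCycle hs _ (hcyc1 i), ?_⟩
  intro i j hij x hx y hy
  exact Stmt9Aux.lift_indep hs (hcyc1 i) (hcyc1 j) (hcyc3 i j hij) x hx y hy
end

section
/- Let k ≥ 1 and let G be an O_k-free graph in which every vertex has degree at least 2. Then for every vertex v of G of degree d, deleting v decreases the cycle rank by at least (d − k + 1)/2, i.e., 2·(r(G) − r(G − v)) ≥ d − k + 1. -/
open SimpleGraph

section Aux
open Finset
variable {V : Type}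

lemma card_edge_delete [Fintype V] (G : SimpleGraph V) (v : V) :
    Nat.card G.edgeSet =
      Nat.card (G.induce {u | u ≠ v}).edgeSet + Nat.card (G.neighborSet v) := by
  classical
  set G' := G.induce {u | u ≠ v} with hG'
  rw [Nat.card_eq_fintype_card, Nat.card_eq_fintype_card, Nat.card_eq_fintype_card,
    ← Set.toFinset_card, ← Set.toFinset_card, ← Set.toFinset_card]
  rw [← edgeFinset, ← edgeFinset]
  have hsplit := Finset.card_filter_add_card_filter_not
    (s := G.edgeFinset) (p := fun e => v ∈ e)
  have hinc : filter (fun e => v ∈ e) G.edgeFinset = G.incidenceFinset v :=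
    (G.incidenceFinset_eq_filter v).symm
  have hdeg : #(G.incidenceFinset v) = (G.neighborSet v).toFinset.card := by
    rw [card_incidenceFinset_eq_degree, ← card_neighborSet_eq_degree, Set.toFinset_card]
  have hbij : #G'.edgeFinset = #(filter (fun e => v ∉ e) G.edgeFinset) := by
    apply Finset.card_bij (fun e _ => Sym2.map Subtype.val e)
    · intro e he
      induction e with
      | _ a b =>
        simp only [mem_edgeFinset, mem_edgeSet] at he
        simp only [Finset.mem_filter, mem_edgeFinset, mem_edgeSet]
        refine ⟨he, ?_⟩
        simp only [Sym2.map_pair_eq, Sym2.mem_iff]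
        rintro (h | h)
        · exact a.2 h.symm
        · exact b.2 h.symm
    · intro e₁ _ e₂ _ h
      exact Sym2.map.injective Subtype.val_injective h
    · intro e he
      induction e with
      | _ a b =>
        simp only [Finset.mem_filter, mem_edgeFinset, mem_edgeSet, Sym2.mem_iff] at he
        obtain ⟨hadj, hne⟩ := he
        push_neg at hne
        have ha : a ≠ v := fun h => hne.1 h.symm
        have hb : b ≠ v := fun h => hne.2 h.symm
        refine ⟨s(⟨a, ha⟩, ⟨b, hb⟩), ?_, by simp⟩
        simpa [mem_edgeFinset, mem_edgeSet] using (show G'.Adj ⟨a, ha⟩ ⟨b, hb⟩ from hadj)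
  rw [hinc] at hsplit
  omega

lemma exists_nbr_reachable {G : SimpleGraph V} {v u : V} (p : G.Walk u v) :
    ∀ (hu : u ≠ v),
    ∃ (x : V) (hx : x ≠ v), G.Adj v x ∧
      (G.induce {w | w ≠ v}).Reachable ⟨u, hu⟩ ⟨x, hx⟩ := by
  induction p with
  | nil => intro hu; exact absurd rfl hu
  | @cons u b w h q ih =>
    intro hu
    by_cases hb : b = w
    · subst hb
      exact ⟨u, hu, h.symm, Reachable.refl _⟩
    · obtain ⟨x, hx, hadj, hr⟩ := ih hb
      have h1 : (G.induce {z | z ≠ w}).Adj ⟨u, hu⟩ ⟨b, hb⟩ := h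
      exact ⟨x, hx, hadj, h1.reachable.trans hr⟩

lemma reachable_induce_of_walk {G : SimpleGraph V} {s : Set V} :
    ∀ {u w : V} (p : G.Walk u w), (∀ x ∈ p.support, x ∈ s) →
    ∀ (hu : u ∈ s) (hw : w ∈ s), (G.induce s).Reachable ⟨u, hu⟩ ⟨w, hw⟩ := by
  intro u w p
  induction p with
  | nil => intro _ hu hw; rfl
  | @cons u b w h q ih =>
    intro hs hu hw
    have hb : b ∈ s := hs b (by simp)
    have h1 : (G.induce s).Adj ⟨u, hu⟩ ⟨b, hb⟩ := h
    exact (h1.reachable).trans (ih (fun x hx => hs x (by simp [hx])) hb hw)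

lemma walk_supp_in_component {G : SimpleGraph V} {u w : V} (p : G.Walk u w)
    {x : V} (hx : x ∈ p.support) :
    G.connectedComponentMk x = G.connectedComponentMk u := by
  classical
  exact ConnectedComponent.sound ((p.takeUntil x hx).reachable.symm)

lemma exists_cycle_in_component [Fintype V] (G : SimpleGraph V) (v : V)
    (hmin : ∀ u, 2 ≤ degN G u)
    (C : (G.induce {u | u ≠ v}).ConnectedComponent)
    (x0 : ↥{u | u ≠ v}) (hx0C : (G.induce {u | u ≠ v}).connectedComponentMk x0 = C)
    (huniq : ∀ y : ↥{u | u ≠ v}, G.Adj v ↑y →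
      (G.induce {u | u ≠ v}).connectedComponentMk y = C → y = x0) :
    ∃ (b : V) (w : G.Walk b b), w.IsCycle ∧
      ∀ x ∈ w.support, ∃ (hx : x ≠ v),
        (G.induce {u | u ≠ v}).connectedComponentMk ⟨x, hx⟩ = C := by
  classical
  set T : Set V := Subtype.val '' C.supp with hT
  have memT : ∀ {x : V}, x ∈ T ↔ ∃ hx : x ≠ v,
      (G.induce {u | u ≠ v}).connectedComponentMk ⟨x, hx⟩ = C := by
    intro x
    constructor
    · rintro ⟨⟨x, hx⟩, hsupp, rfl⟩
      exact ⟨hx, (ConnectedComponent.mem_supp_iff _ _).mp hsupp⟩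
    · rintro ⟨hx, hc⟩
      exact ⟨⟨x, hx⟩, (ConnectedComponent.mem_supp_iff _ _).mpr hc, rfl⟩
  set H := G.induce T with hH
  have hx0T : (↑x0 : V) ∈ T := memT.mpr ⟨x0.2, hx0C⟩
  haveI : Nonempty ↥T := ⟨⟨↑x0, hx0T⟩⟩
  have hconn : H.Connected := by
    refine ⟨?_⟩
    rintro ⟨a, ha⟩ ⟨b, hb⟩
    obtain ⟨ha', hca⟩ := memT.mp ha
    obtain ⟨hb', hcb⟩ := memT.mp hb
    obtain ⟨p⟩ : (G.induce {u | u ≠ v}).Reachable ⟨a, ha'⟩ ⟨b, hb'⟩ :=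
      ConnectedComponent.exact (hca.trans hcb.symm)
    refine reachable_induce_of_walk
      (p.map (SimpleGraph.Embedding.induce {u | u ≠ v}).toHom) ?_ ha hb
    intro x hxq
    rw [SimpleGraph.Walk.support_map, List.mem_map] at hxq
    obtain ⟨x', hx', rfl⟩ := hxq
    refine memT.mpr ⟨x'.2, ?_⟩
    exact (walk_supp_in_component p hx').trans hca
  have key : ∀ (u : V) (hu : u ∈ T),
      ((G.neighborFinset u).filter (· ≠ v)).card ≤ H.degree ⟨u, hu⟩ := by
    intro u hu
    rw [← card_neighborFinset_eq_degree]
    obtain ⟨hu', hcu⟩ := memT.mp hu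
    have hmem : ∀ w ∈ (G.neighborFinset u).filter (· ≠ v), w ∈ T := by
      intro w hw
      simp only [Finset.mem_filter, mem_neighborFinset] at hw
      obtain ⟨hadj, hwv⟩ := hw
      refine memT.mpr ⟨hwv, ?_⟩
      have hadj' : (G.induce {u | u ≠ v}).Adj ⟨u, hu'⟩ ⟨w, hwv⟩ := hadj
      rw [← hcu]
      exact ConnectedComponent.connectedComponentMk_eq_of_adj hadj'.symm
    apply Finset.card_le_card_of_injOn
      (fun w => if h : w ∈ T then (⟨w, h⟩ : ↥T) else ⟨u, hu⟩)
    · intro w hw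
      have hwT := hmem w hw
      simp only [Finset.mem_coe, Finset.mem_filter, mem_neighborFinset] at hw
      simp only [dif_pos hwT, Finset.mem_coe, mem_neighborFinset]
      exact (hw.1 : G.Adj u w)
    · intro w1 h1 w2 h2 heq
      rw [Finset.mem_coe] at h1 h2
      simp only [dif_pos (hmem w1 h1), dif_pos (hmem w2 h2)] at heq
      exact congrArg Subtype.val heq
  have hdn : ∀ u : V, degN G u = (G.neighborFinset u).card := by
    intro u
    rw [degN, Nat.card_eq_fintype_card, neighborFinset_def, Set.toFinset_card]
  have filter_card : ∀ u : V, degN G u ≤ ((G.neighborFinset u).filter (· ≠ v)).card + 1 := by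
    intro u
    have h1 := Finset.card_filter_add_card_filter_not
      (s := G.neighborFinset u) (p := (· ≠ v))
    have hsub : (G.neighborFinset u).filter (fun w => ¬ w ≠ v) ⊆ {v} := by
      intro w hw
      simp only [Finset.mem_filter, not_not] at hw
      simp [hw.2]
    have h2 := Finset.card_le_card hsub
    have h3 : #({v} : Finset V) = 1 := Finset.card_singleton v
    have h4 := hdn u
    omega
  have hdegH : ∀ (u : V) (hu : u ∈ T), u ≠ ↑x0 → 2 ≤ H.degree ⟨u, hu⟩ := by
    intro u hu hne
    obtain ⟨hu', hcu⟩ := memT.mp hu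
    have hvu : ¬ G.Adj u v := by
      intro hadj
      exact hne (congrArg Subtype.val (huniq ⟨u, hu'⟩ hadj.symm hcu))
    have hfil : (G.neighborFinset u).filter (· ≠ v) = G.neighborFinset u := by
      apply Finset.filter_true_of_mem
      intro w hw
      rintro rfl
      exact hvu ((mem_neighborFinset _ _ _).mp hw)
    calc 2 ≤ degN G u := hmin u
    _ = ((G.neighborFinset u).filter (· ≠ v)).card := by rw [hdn u, hfil]
    _ ≤ H.degree ⟨u, hu⟩ := key u hu
  have hdegH0 : 1 ≤ H.degree ⟨↑x0, hx0T⟩ := by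
    have h2 := hmin ↑x0
    have h3 := filter_card ↑x0
    have h4 := key ↑x0 hx0T
    omega
  have hcyc : ∃ (b : ↥T) (w : H.Walk b b), w.IsCycle := by
    by_contra hac
    push_neg at hac
    have htree : H.IsTree := ⟨hconn, fun b w hw => hac b w hw⟩
    have hcard := htree.card_edgeFinset
    have hhs := H.sum_degrees_eq_twice_card_edges
    set y0 : ↥T := ⟨↑x0, hx0T⟩ with hy0
    have hsum : ∑ u : ↥T, (if u = y0 then 1 else 2) ≤ ∑ u : ↥T, H.degree u := by
      apply Finset.sum_le_sum
      intro u _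
      by_cases h : u = y0
      · subst h; simp only [if_pos rfl]; exact hdegH0
      · simp only [if_neg h]
        refine hdegH ↑u u.2 (fun hval => h (Subtype.ext hval))
    have hsum2 : ∑ u : ↥T, (if u = y0 then 1 else 2) =
        2 * (Fintype.card ↥T - 1) + 1 := by
      rw [← Finset.sum_erase_add _ _ (Finset.mem_univ y0), if_pos rfl]
      have hcong : ∀ x ∈ Finset.univ.erase y0, (if x = y0 then 1 else 2) = 2 :=
        fun x hx => if_neg (Finset.ne_of_mem_erase hx)
      rw [Finset.sum_congr rfl hcong, Finset.sum_const, smul_eq_mul,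
        Finset.card_erase_of_mem (Finset.mem_univ y0), Finset.card_univ, mul_comm]
    have hT1 : 1 ≤ Fintype.card ↥T := Fintype.card_pos
    omega
  obtain ⟨b, w, hw⟩ := hcyc
  refine ⟨↑b, w.map (SimpleGraph.Embedding.induce T).toHom, hw.map Subtype.val_injective, ?_⟩
  intro x hxs
  have hxs : x ∈ (w.map (SimpleGraph.Embedding.induce T).toHom).support := hxs
  rw [SimpleGraph.Walk.support_map, List.mem_map] at hxs
  obtain ⟨x', _, rfl⟩ := hxs
  show ∃ (hx : (↑x' : V) ≠ v), (G.induce {u | u ≠ v}).connectedComponentMk ⟨↑x', hx⟩ = C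
  exact memT.mp x'.2

end Aux

open Finset in
/-- If `G` is `O_k`-free with minimum degree at least 2 and `v` has
degree `d`, then deleting `v` decreases the cycle rank by at least `(d - k + 1)/2`. -/
theorem stmt11 (k : ℕ) (hk : 1 ≤ k) (V : Type) [Fintype V] (G : SimpleGraph V)
    (hfree : OkFree G k) (hmin : ∀ u : V, 2 ≤ degN G u) (v : V) (d : ℕ)
    (hd : degN G v = d) :
    (d : ℤ) - (k : ℤ) + 1 ≤ 2 * (cycleRank G - cycleRank (G.induce {u | u ≠ v})) := by
  classical
  haveI : Fintype ((G.induce {u | u ≠ v}).ConnectedComponent) := Fintype.ofFinite _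
  haveI : Fintype G.ConnectedComponent := Fintype.ofFinite _
  -- the neighbors of v, as vertices of the reduced graph
  set cmap : ↥{u | u ≠ v} → (G.induce {u | u ≠ v}).ConnectedComponent :=
    fun u => (G.induce {u | u ≠ v}).connectedComponentMk u with hcmap
  set nbF : Finset ↥{u | u ≠ v} := univ.filter (fun u => G.Adj v ↑u) with hnbF
  set M : Finset ((G.induce {u | u ≠ v}).ConnectedComponent) := nbF.image cmap with hM
  set A : Finset ((G.induce {u | u ≠ v}).ConnectedComponent) :=
    M.filter (fun C => (nbF.filter (fun u => cmap u = C)).card = 1) with hA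
  -- neighbor count
  have hnbcard : nbF.card = d := by
    have hb : nbF.card = (G.neighborFinset v).card := by
      apply Finset.card_bij (fun (u : ↥{u | u ≠ v}) _ => (u : V))
      · intro u hu
        rw [hnbF, Finset.mem_filter] at hu
        rw [mem_neighborFinset]
        exact hu.2
      · intro u1 _ u2 _ h
        exact Subtype.ext h
      · intro w hw
        rw [mem_neighborFinset] at hw
        refine ⟨⟨w, (G.ne_of_adj hw).symm⟩, ?_, rfl⟩
        rw [hnbF, Finset.mem_filter]
        exact ⟨Finset.mem_univ _, hw⟩
    rw [hb, ← hd, degN, Nat.card_eq_fintype_card, neighborFinset_def, Set.toFinset_card]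
  -- vertex count
  have hV : Nat.card V = Nat.card ↥{u | u ≠ v} + 1 := by
    rw [Nat.card_eq_fintype_card, Nat.card_eq_fintype_card]
    have h1 : Fintype.card ↥{u | u ≠ v} = Fintype.card {u : V // ¬ u = v} :=
      Fintype.card_congr (Equiv.refl _)
    rw [h1, Fintype.card_subtype_compl, Fintype.card_subtype_eq]
    have h2 : 1 ≤ Fintype.card V := Fintype.card_pos_iff.mpr ⟨v⟩
    omega
  -- edge count
  have hE : Nat.card G.edgeSet =
      Nat.card (G.induce {u | u ≠ v}).edgeSet + d := by
    rw [card_edge_delete G v, ← hd]; rfl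
  -- component count
  have hcc : Nat.card ((G.induce {u | u ≠ v}).ConnectedComponent) + 1 ≤
      Nat.card G.ConnectedComponent + M.card := by
    rw [Nat.card_eq_fintype_card, Nat.card_eq_fintype_card]
    set f : (G.induce {u | u ≠ v}).ConnectedComponent → G.ConnectedComponent :=
      ConnectedComponent.map (SimpleGraph.Embedding.induce {u | u ≠ v}).toHom with hf
    -- any component whose image is the component of v contains a neighbor of v
    have hkey : ∀ C : (G.induce {u | u ≠ v}).ConnectedComponent,
        f C = G.connectedComponentMk v → C ∈ M := by
      intro C hfc
      obtain ⟨u, rfl⟩ := C.exists_rep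
      have hfc' : G.connectedComponentMk ↑u = G.connectedComponentMk v := hfc
      obtain ⟨p⟩ : G.Reachable ↑u v := ConnectedComponent.exact hfc'
      obtain ⟨x, hx, hadj, hr⟩ := exists_nbr_reachable p u.2
      show (G.induce {u | u ≠ v}).connectedComponentMk u ∈ M
      rw [hM, Finset.mem_image]
      refine ⟨⟨x, hx⟩, ?_, ?_⟩
      · rw [hnbF, Finset.mem_filter]; exact ⟨Finset.mem_univ _, hadj⟩
      · exact (ConnectedComponent.sound hr.symm).trans (congrArg _ (Subtype.coe_eta u u.2))
    have hmaps : ∀ C ∈ Finset.univ \ M,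
        f C ∈ Finset.univ.erase (G.connectedComponentMk v) := by
      intro C hC
      rw [Finset.mem_sdiff] at hC
      refine Finset.mem_erase.mpr ⟨?_, Finset.mem_univ _⟩
      intro heq
      exact hC.2 (hkey C heq)
    have hinj : Set.InjOn f (Finset.univ \ M : Finset _) := by
      intro C1 h1 C2 h2 heq
      rw [Finset.mem_coe, Finset.mem_sdiff] at h1 h2
      obtain ⟨u1, rfl⟩ := C1.exists_rep
      obtain ⟨u2, rfl⟩ := C2.exists_rep
      have heq' : G.connectedComponentMk ↑u1 = G.connectedComponentMk ↑u2 := heq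
      obtain ⟨p⟩ : G.Reachable ↑u1 ↑u2 := ConnectedComponent.exact heq'
      by_cases hv : v ∈ p.support
      · exfalso
        obtain ⟨x, hx, hadj, hr⟩ := exists_nbr_reachable (p.takeUntil v hv) u1.2
        apply h1.2
        show (G.induce {u | u ≠ v}).connectedComponentMk u1 ∈ M
        rw [hM, Finset.mem_image]
        refine ⟨⟨x, hx⟩, ?_, ?_⟩
        · rw [hnbF, Finset.mem_filter]; exact ⟨Finset.mem_univ _, hadj⟩
        · exact (ConnectedComponent.sound hr.symm).trans (congrArg _ (Subtype.coe_eta u1 u1.2))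
      · have hsupp : ∀ x ∈ p.support, x ∈ {u : V | u ≠ v} := by
          intro x hxp
          intro hxv
          exact hv (hxv ▸ hxp)
        have := reachable_induce_of_walk p hsupp u1.2 u2.2
        have h3 : (G.induce {u | u ≠ v}).connectedComponentMk ⟨↑u1, u1.2⟩ =
            (G.induce {u | u ≠ v}).connectedComponentMk ⟨↑u2, u2.2⟩ :=
          ConnectedComponent.sound this
        rw [Subtype.coe_eta, Subtype.coe_eta] at h3
        exact h3
    have h2 := Finset.card_le_card_of_injOn f hmaps hinj
    rw [Finset.card_erase_of_mem (Finset.mem_univ _), Finset.card_univ] at h2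
    have h3 : 1 ≤ Fintype.card G.ConnectedComponent :=
      Fintype.card_pos_iff.mpr ⟨G.connectedComponentMk v⟩
    have h4 : #(Finset.univ \ M) = Fintype.card ((G.induce {u | u ≠ v}).ConnectedComponent) - M.card := by
      rw [Finset.card_sdiff_of_subset (Finset.subset_univ _), Finset.card_univ]
    have h5 := Finset.card_le_univ M
    omega
  -- degree bound
  have hm2 : 2 * M.card ≤ d + A.card := by
    have hds : nbF.card = ∑ C ∈ M, (nbF.filter (fun u => cmap u = C)).card := by
      rw [hM]; exact Finset.card_eq_sum_card_image cmap nbF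
    have hfibpos : ∀ C ∈ M, 1 ≤ (nbF.filter (fun u => cmap u = C)).card := by
      intro C hC
      rw [hM, Finset.mem_image] at hC
      obtain ⟨u, hu, hcu⟩ := hC
      refine Finset.card_pos.mpr ⟨u, ?_⟩
      rw [Finset.mem_filter]; exact ⟨hu, hcu⟩
    have hsplit := Finset.sum_filter_add_sum_filter_not M
      (fun C => (nbF.filter (fun u => cmap u = C)).card = 1)
      (fun C => (nbF.filter (fun u => cmap u = C)).card)
    rw [← hA] at hsplit
    have hAsum : ∑ C ∈ A, (nbF.filter (fun u => cmap u = C)).card = A.card := by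
      have hstep : ∀ C ∈ A, (nbF.filter (fun u => cmap u = C)).card = 1 := by
        intro C hC
        rw [hA, Finset.mem_filter] at hC
        exact hC.2
      rw [Finset.sum_congr rfl hstep]
      simp
    have hcardB : (M.filter (fun C => ¬ (nbF.filter (fun u => cmap u = C)).card = 1)).card
        = M.card - A.card := by
      have := Finset.card_filter_add_card_filter_not
        (s := M) (p := fun C => (nbF.filter (fun u => cmap u = C)).card = 1)
      rw [← hA] at this
      omega
    have hBsum : (M.filter (fun C => ¬ (nbF.filter (fun u => cmap u = C)).card = 1)).card * 2 ≤
        ∑ C ∈ M.filter (fun C => ¬ (nbF.filter (fun u => cmap u = C)).card = 1),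
          (nbF.filter (fun u => cmap u = C)).card := by
      rw [← smul_eq_mul]
      apply Finset.card_nsmul_le_sum
      intro C hC
      rw [Finset.mem_filter] at hC
      have := hfibpos C hC.1
      omega
    have hAle : A.card ≤ M.card := hA ▸ Finset.card_filter_le _ _
    rw [hnbcard] at hds
    omega
  -- cycles bound
  have ha2 : A.card + 1 ≤ k := by
    by_contra hcon
    have hkA : k ≤ A.card := by omega
    obtain ⟨Asub, hsub, hcardk⟩ := Finset.exists_subset_card_eq hkA
    have hcyc : ∀ C ∈ A, ∃ (b : V) (w : G.Walk b b), w.IsCycle ∧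
        ∀ x ∈ w.support, ∃ (hx : x ≠ v),
          (G.induce {u | u ≠ v}).connectedComponentMk ⟨x, hx⟩ = C := by
      intro C hC
      rw [hA, Finset.mem_filter] at hC
      obtain ⟨hCM, hone⟩ := hC
      obtain ⟨x0, hx0⟩ := Finset.card_eq_one.mp hone
      have hx0mem : x0 ∈ nbF.filter (fun u => cmap u = C) :=
        hx0 ▸ Finset.mem_singleton_self x0
      rw [Finset.mem_filter] at hx0mem
      obtain ⟨hx0nb, hx0C⟩ := hx0mem
      apply exists_cycle_in_component G v hmin C x0 hx0C
      intro y hy1 hy2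
      have hy : y ∈ nbF.filter (fun u => cmap u = C) := by
        rw [Finset.mem_filter, hnbF, Finset.mem_filter]
        exact ⟨⟨Finset.mem_univ _, hy1⟩, hy2⟩
      rw [hx0] at hy
      exact Finset.mem_singleton.mp hy
    choose cyc wk hwcyc hwsupp using hcyc
    have e : Fin k ≃ {x // x ∈ Asub} := (finCongr hcardk.symm).trans Asub.equivFin.symm
    have hmemA : ∀ i : Fin k, (↑(e i) : (G.induce {u | u ≠ v}).ConnectedComponent) ∈ A :=
      fun i => hsub (e i).2
    apply hfree
    refine ⟨fun i => cyc _ (hmemA i), fun i => wk _ (hmemA i),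
      fun i => hwcyc _ (hmemA i), ?_⟩
    intro i j hij x hx y hy
    obtain ⟨hxv, hxC⟩ := hwsupp _ (hmemA i) x hx
    obtain ⟨hyv, hyC⟩ := hwsupp _ (hmemA j) y hy
    have hCij : (↑(e i) : (G.induce {u | u ≠ v}).ConnectedComponent) ≠ ↑(e j) := by
      intro h
      exact hij (e.injective (Subtype.ext h))
    constructor
    · intro hxy
      subst hxy
      exact hCij (hxC ▸ hyC ▸ rfl)
    · intro hadj
      have hadj' : (G.induce {u | u ≠ v}).Adj ⟨x, hxv⟩ ⟨y, hyv⟩ := hadj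
      have hmk := ConnectedComponent.connectedComponentMk_eq_of_adj hadj'
      rw [hxC, hyC] at hmk
      exact hCij hmk
  simp only [cycleRank]
  omega
end
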